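/- Characterization of variable-demand equilibria: let f : K → ℝ with f k ≥ 0 for all k and q : W → ℝ with q w > 0 and Σ_{k : od k = w} f k = q w for all w. Then (f, q) is an equilibrium of the variable-demand dynamical system (F_k(f, q) = 0 for all k and G_w(f, q) = 0 for all w) if and only if for every route k with f k > 0 one has c_k(f) = u_{od k}(q_{od k}); i.e., every used route's travel time equals the inverse-demand travel time of its O-D pair. -/
import Mathlib


open Finset

/-- Link flow on arc `a` induced by route flows `f`. -/
noncomputable def linkFlow {A K : Type*} [Fintype K] (δ : A → K → ℝ)
    (f : K → ℝ) (a : A) : ℝ :=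
  ∑ k, δ a k * f k

/-- Travel time on route `k` induced by route flows `f`. -/
noncomputable def routeTime {A K : Type*} [Fintype A] [Fintype K] (δ : A → K → ℝ)
    (t : A → ℝ → ℝ) (f : K → ℝ) (k : K) : ℝ :=
  ∑ a, t a (linkFlow δ f a) * δ a k

/-- O-D FIFO violation of route `k` at route-flow state `f`. -/
noncomputable def fifoViolation {A W K : Type*} [Fintype A] [Fintype K] [DecidableEq W]
    (od : K → W) (δ : A → K → ℝ) (t : A → ℝ → ℝ) (f : K → ℝ) (k : K) : ℝ :=
  f k * ∑ j ∈ univ.filter (fun j => od j = od k),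
    (routeTime δ t f k - routeTime δ t f j) * f j

/-- Right-hand side for route flows in the variable-demand dynamical system. -/
noncomputable def Fvar {A W K : Type*} [Fintype A] [Fintype K]
    (od : K → W) (δ : A → K → ℝ) (t : A → ℝ → ℝ) (u : W → ℝ → ℝ)
    (f : K → ℝ) (q : W → ℝ) (k : K) : ℝ :=
  -(q (od k) * f k * (routeTime δ t f k - u (od k) (q (od k))))

/-- Right-hand side for demands in the variable-demand dynamical system. -/
noncomputable def Gvar {A W K : Type*} [Fintype A] [Fintype K] [DecidableEq W]
    (od : K → W) (δ : A → K → ℝ) (t : A → ℝ → ℝ) (u : W → ℝ → ℝ)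
    (f : K → ℝ) (q : W → ℝ) (w : W) : ℝ :=
  -(q w * ((∑ k ∈ univ.filter (fun k => od k = w), f k * routeTime δ t f k)
      - q w * u w (q w)))

theorem variable_demand_equilibrium_iff {A W K : Type*} [Fintype A] [Fintype W] [Fintype K] [DecidableEq W]
    (od : K → W) (δ : A → K → ℝ) (hδ : ∀ a k, δ a k = 0 ∨ δ a k = 1)
    (t : A → ℝ → ℝ)
    (u : W → ℝ → ℝ) (f : K → ℝ) (hf : ∀ k, 0 ≤ f k)
    (q : W → ℝ) (hq : ∀ w, 0 < q w)
    (hcons : ∀ w, ∑ k ∈ univ.filter (fun k => od k = w), f k = q w) :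
    ((∀ k, Fvar od δ t u f q k = 0) ∧ (∀ w, Gvar od δ t u f q w = 0)) ↔
      (∀ k, 0 < f k → routeTime δ t f k = u (od k) (q (od k))) := by
  constructor
  · rintro ⟨hF, hG⟩ k hk
    have h := hF k
    unfold Fvar at h
    have hqk := (hq (od k)).ne'
    have : routeTime δ t f k - u (od k) (q (od k)) = 0 := by
      rcases mul_eq_zero.mp (by linarith [h] : q (od k) * f k *
          (routeTime δ t f k - u (od k) (q (od k))) = 0) with h1 | h1
      · rcases mul_eq_zero.mp h1 with h2 | h2
        · exact absurd h2 hqk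
        · exact absurd h2 hk.ne'
      · exact h1
    linarith
  · intro h
    have hF : ∀ k, Fvar od δ t u f q k = 0 := by
      intro k
      unfold Fvar
      rcases eq_or_lt_of_le (hf k) with h0 | h0
      · rw [← h0]; ring
      · rw [h k h0]; ring
    refine ⟨hF, fun w => ?_⟩
    unfold Gvar
    have : ∑ k ∈ univ.filter (fun k => od k = w), f k * routeTime δ t f k
        = ∑ k ∈ univ.filter (fun k => od k = w), f k * u w (q w) := by
      apply Finset.sum_congr rfl
      intro k hk
      simp only [Finset.mem_filter] at hk
      rcases eq_or_lt_of_le (hf k) with h0 | h0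
      · rw [← h0]; ring
      · rw [h k h0, hk.2]
    rw [this, ← Finset.sum_mul, hcons w]
    ring
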